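/- Let n ≥ 3 be an integer and let I ⊆ ℝ be a nonempty open interval with I ∩ {−1, 0, 1} = ∅. Let Ω = {(X₀, X₁) ∈ ℝ² : X₁ ∈ I and X₀ > X₁²}, and let F, G : Ω → ℝ be continuously differentiable. Suppose that at every point of Ω the following four equations hold (subscripts denoting partial derivatives): (i) (n−1)G + (X₀−X₁²)(X₁ F_{X₀} − G_{X₀}) = 0; (ii) nF − X₁ F_{X₁} + G_{X₁} − X₀ F_{X₀} + (X₀/X₁) G_{X₀} = 0; (iii) (1−n)X₁ G + (X₀−X₁²)(X₁ G_{X₀} − F_{X₀}) = 0; (iv) F_{X₁} − (n−2)G − X₁ G_{X₁} + (X₀/X₁) F_{X₀} − X₀ G_{X₀} = 0. Then F = 0 and G = 0 identically on Ω. -/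

import Mathlib

/-- Partial derivative in the `X₀` (first-coordinate) direction. -/
noncomputable def pd0 (h : ℝ × ℝ → ℝ) (p : ℝ × ℝ) : ℝ := fderiv ℝ h p (1, 0)

/-- Partial derivative in the `X₁` (second-coordinate) direction. -/
noncomputable def pd1 (h : ℝ × ℝ → ℝ) (p : ℝ × ℝ) : ℝ := fderiv ℝ h p (0, 1)

lemma hasDerivAt_horiz {h : ℝ × ℝ → ℝ} {p : ℝ × ℝ} (hd : DifferentiableAt ℝ h p) :
    HasDerivAt (fun t => h (t, p.2)) (pd0 h p) p.1 := by
  have hline : HasDerivAt (fun t : ℝ => ((t, p.2) : ℝ × ℝ)) ((1 : ℝ), (0 : ℝ)) p.1 :=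
    (hasDerivAt_id p.1).prodMk (hasDerivAt_const p.1 p.2)
  have hfd : HasFDerivAt h (fderiv ℝ h p) ((p.1, p.2) : ℝ × ℝ) := by
    simpa using hd.hasFDerivAt
  exact
    HasFDerivAt.comp_hasDerivAt_of_eq (l := h) (f := fun t : ℝ => ((t, p.2) : ℝ × ℝ)) p.1 hfd hline rfl

lemma hasDerivAt_vert {h : ℝ × ℝ → ℝ} {p : ℝ × ℝ} (hd : DifferentiableAt ℝ h p) :
    HasDerivAt (fun t => h (p.1, t)) (pd1 h p) p.2 := by
  have hline : HasDerivAt (fun t : ℝ => ((p.1, t) : ℝ × ℝ)) ((0 : ℝ), (1 : ℝ)) p.2 :=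
    (hasDerivAt_const p.2 p.1).prodMk (hasDerivAt_id p.2)
  have hfd : HasFDerivAt h (fderiv ℝ h p) ((p.1, p.2) : ℝ × ℝ) := by
    simpa using hd.hasFDerivAt
  exact
    HasFDerivAt.comp_hasDerivAt_of_eq (l := h) (f := fun t : ℝ => ((p.1, t) : ℝ × ℝ)) p.2 hfd hline rfl

/-- A differentiable function with vanishing first partial is constant along
horizontal segments contained in the domain. -/
lemma horiz_const {Ω : Set (ℝ × ℝ)} {h : ℝ × ℝ → ℝ}
    (hd : ∀ p ∈ Ω, DifferentiableAt ℝ h p) (h0 : ∀ p ∈ Ω, pd0 h p = 0)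
    {y a b : ℝ} (hseg : ∀ t, min a b ≤ t → t ≤ max a b → ((t, y) : ℝ × ℝ) ∈ Ω) :
    h (a, y) = h (b, y) := by
  set c := min a b with hc
  set d := max a b with hdd
  have hcont : ContinuousOn (fun t => h (t, y)) (Set.Icc c d) := by
    intro t ht
    have hp : ((t, y) : ℝ × ℝ) ∈ Ω := hseg t ht.1 ht.2
    exact (hasDerivAt_horiz (hd _ hp)).continuousAt.continuousWithinAt
  have hderiv : ∀ t ∈ Set.Ico c d, HasDerivWithinAt (fun t => h (t, y)) 0 (Set.Ici t) t := by
    intro t ht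
    have hp : ((t, y) : ℝ × ℝ) ∈ Ω := hseg t ht.1 ht.2.le
    have := hasDerivAt_horiz (hd _ hp)
    rw [h0 _ hp] at this
    exact this.hasDerivWithinAt
  have key := constant_of_has_deriv_right_zero hcont hderiv
  have ha := key a ⟨min_le_left a b, le_max_left a b⟩
  have hb := key b ⟨min_le_right a b, le_max_right a b⟩
  rw [ha, hb]

/-- No-go theorem: the four PDEs arising from the conservation equation for a
spin-`n` current ansatz of the auxiliary-field free boson force `F = G = 0`
on `Ω = {(X₀, X₁) | X₁ ∈ I, X₀ > X₁²}` for `n ≥ 3`. -/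
theorem stmt0 (n : ℕ) (hn : 3 ≤ n)
    (I : Set ℝ) (hIopen : IsOpen I) (hIconn : I.OrdConnected) (hIne : I.Nonempty)
    (hIm1 : (-1 : ℝ) ∉ I) (hI0 : (0 : ℝ) ∉ I) (hI1 : (1 : ℝ) ∉ I)
    (Ω : Set (ℝ × ℝ)) (hΩ : Ω = {p : ℝ × ℝ | p.2 ∈ I ∧ p.2 ^ 2 < p.1})
    (F G : ℝ × ℝ → ℝ)
    (hF : ContDiffOn ℝ 1 F Ω) (hG : ContDiffOn ℝ 1 G Ω)
    (heq1 : ∀ p ∈ Ω,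
      ((n : ℝ) - 1) * G p + (p.1 - p.2 ^ 2) * (p.2 * pd0 F p - pd0 G p) = 0)
    (heq2 : ∀ p ∈ Ω,
      (n : ℝ) * F p - p.2 * pd1 F p + pd1 G p - p.1 * pd0 F p
        + (p.1 / p.2) * pd0 G p = 0)
    (heq3 : ∀ p ∈ Ω,
      (1 - (n : ℝ)) * p.2 * G p + (p.1 - p.2 ^ 2) * (p.2 * pd0 G p - pd0 F p) = 0)
    (heq4 : ∀ p ∈ Ω,
      pd1 F p - ((n : ℝ) - 2) * G p - p.2 * pd1 G p
        + (p.1 / p.2) * pd0 F p - p.1 * pd0 G p = 0) :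
    ∀ p ∈ Ω, F p = 0 ∧ G p = 0 := by
  have hn3 : (3 : ℝ) ≤ (n : ℝ) := by exact_mod_cast hn
  have hΩo : IsOpen Ω := by
    rw [hΩ]
    have h1 : IsOpen {p : ℝ × ℝ | p.2 ∈ I} := hIopen.preimage continuous_snd
    have h2 : IsOpen {p : ℝ × ℝ | p.2 ^ 2 < p.1} :=
      isOpen_lt (continuous_snd.pow 2) continuous_fst
    exact h1.inter h2
  have hmem : ∀ p ∈ Ω, p.2 ∈ I ∧ p.2 ^ 2 < p.1 := by
    intro p hp; rwa [hΩ] at hp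
  have hFd : ∀ p ∈ Ω, DifferentiableAt ℝ F p := fun p hp =>
    (hF.contDiffAt (hΩo.mem_nhds hp)).differentiableAt one_ne_zero
  have hGd : ∀ p ∈ Ω, DifferentiableAt ℝ G p := fun p hp =>
    (hG.contDiffAt (hΩo.mem_nhds hp)).differentiableAt one_ne_zero
  have hyne0 : ∀ p ∈ Ω, p.2 ≠ 0 := by
    intro p hp he; exact hI0 (he ▸ (hmem p hp).1)
  -- Step 1: ∂₀ F = 0 on Ω.
  have hF0 : ∀ p ∈ Ω, pd0 F p = 0 := by
    intro p hp
    obtain ⟨hpI, hpX⟩ := hmem p hp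
    have h1 := heq1 p hp
    have h3 := heq3 p hp
    have hkey : (p.1 - p.2 ^ 2) * ((p.2 ^ 2 - 1) * pd0 F p) = 0 := by
      linear_combination p.2 * h1 + h3
    have hD : p.1 - p.2 ^ 2 ≠ 0 := by linarith
    have hy1 : p.2 ≠ 1 := fun e => hI1 (e ▸ hpI)
    have hym1 : p.2 ≠ -1 := fun e => hIm1 (e ▸ hpI)
    have hsq : p.2 ^ 2 - 1 ≠ 0 := by
      intro h
      have : (p.2 - 1) * (p.2 + 1) = 0 := by linear_combination h
      rcases mul_eq_zero.mp this with h' | h'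
      · exact hy1 (by linarith)
      · exact hym1 (by linarith)
    have := (mul_eq_zero.mp hkey).resolve_left hD
    exact (mul_eq_zero.mp this).resolve_left hsq
  -- Step 2: combined equation (n-2)G = n y F + (1-y²) ∂₁F.
  have key2 : ∀ p ∈ Ω,
      (n : ℝ) * p.2 * F p + (1 - p.2 ^ 2) * pd1 F p - ((n : ℝ) - 2) * G p = 0 := by
    intro p hp
    have h2 := heq2 p hp
    have h4 := heq4 p hp
    have hz : p.2 * (p.2)⁻¹ = 1 := mul_inv_cancel₀ (hyne0 p hp)
    linear_combination p.2 * h2 + h4 + (p.1 * p.2 - p.1 * (p.2)⁻¹) * hF0 p hp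
      - p.1 * pd0 G p * hz
  -- Step 3: G is constant along horizontal sections, hence ∂₀G = 0, hence G = 0.
  have hGzero : ∀ p ∈ Ω, G p = 0 := by
    intro p hp
    obtain ⟨hpI, hpX⟩ := hmem p hp
    -- membership of horizontal rows
    have hrow : ∀ t b : ℝ, t ∈ I → t ^ 2 < b → ((b, t) : ℝ × ℝ) ∈ Ω := by
      intro t b htI htb; rw [hΩ]; exact ⟨htI, htb⟩
    -- G is constant along the horizontal section through p
    have hGconst : ∀ b : ℝ, p.2 ^ 2 < b → G (b, p.2) = G p := by
      intro b hb
      set m := min b p.1 with hm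
      have hmlt : p.2 ^ 2 < m := lt_min hb hpX
      have hseg : ∀ (t : ℝ), t ∈ I → t ^ 2 < m →
          ∀ s, min b p.1 ≤ s → s ≤ max b p.1 → ((s, t) : ℝ × ℝ) ∈ Ω := by
        intro t htI htm s hs1 _
        exact hrow t s htI (lt_of_lt_of_le htm hs1)
      -- F equal along rows
      have hFrow : ∀ t : ℝ, t ∈ I → t ^ 2 < m → F (b, t) = F (p.1, t) := by
        intro t htI htm
        exact horiz_const hFd hF0 (hseg t htI htm)
      -- the neighborhood of p.2 where rows work
      have hU : {t : ℝ | t ∈ I ∧ t ^ 2 < m} ∈ nhds p.2 := by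
        have hopen : IsOpen {t : ℝ | t ∈ I ∧ t ^ 2 < m} :=
          (hIopen.preimage continuous_id).inter
            (isOpen_lt (continuous_pow 2) continuous_const)
        exact hopen.mem_nhds ⟨hpI, hmlt⟩
      -- pd1 F equal at (b,p.2) and p
      have hbmem : ((b, p.2) : ℝ × ℝ) ∈ Ω := hrow p.2 b hpI hb
      have hpd1eq : pd1 F (b, p.2) = pd1 F p := by
        have hu : HasDerivAt (fun t => F (b, t)) (pd1 F (b, p.2)) p.2 :=
          hasDerivAt_vert (hFd _ hbmem)
        have hv : HasDerivAt (fun t => F (p.1, t)) (pd1 F p) p.2 :=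
          hasDerivAt_vert (hFd p hp)
        have hev : (fun t => F (b, t)) =ᶠ[nhds p.2] fun t => F (p.1, t) := by
          filter_upwards [hU] with t ht using hFrow t ht.1 ht.2
        exact hu.unique (hv.congr_of_eventuallyEq hev)
      -- F equal at (b,p.2) and p
      have hFeq : F (b, p.2) = F p := by
        have := hFrow p.2 hpI hmlt
        simpa using this
      -- conclude from key2 at both points
      have k1 := key2 (b, p.2) hbmem
      have k2 := key2 p hp
      simp only at k1
      have hne : (n : ℝ) - 2 ≠ 0 := by linarith
      have : ((n : ℝ) - 2) * (G (b, p.2) - G p) = 0 := by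
        linear_combination k2 - k1 + (n : ℝ) * p.2 * hFeq + (1 - p.2 ^ 2) * hpd1eq
      have := (mul_eq_zero.mp this).resolve_left hne
      linarith [this]
    -- ∂₀ G = 0 at p
    have hG0 : pd0 G p = 0 := by
      have hev : (fun t => G (t, p.2)) =ᶠ[nhds p.1] fun _ => G p := by
        have hmem' : {t : ℝ | p.2 ^ 2 < t} ∈ nhds p.1 :=
          (isOpen_lt continuous_const continuous_id).mem_nhds hpX
        filter_upwards [hmem'] with t ht using hGconst t ht
      have hd' : HasDerivAt (fun _ : ℝ => G p) (pd0 G p) p.1 :=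
        (hasDerivAt_horiz (hGd p hp)).congr_of_eventuallyEq hev.symm
      exact hd'.unique (hasDerivAt_const _ _)
    have h1 := heq1 p hp
    rw [hF0 p hp, hG0] at h1
    have hne : (n : ℝ) - 1 ≠ 0 := by linarith
    have : ((n : ℝ) - 1) * G p = 0 := by linear_combination h1
    have := (mul_eq_zero.mp this).resolve_left hne
    exact this
  -- Step 4: all derivatives of G vanish, hence F = 0.
  have hGfd : ∀ p ∈ Ω, fderiv ℝ G p = 0 := by
    intro p hp
    have hev : G =ᶠ[nhds p] fun _ => (0 : ℝ) := by
      filter_upwards [hΩo.mem_nhds hp] with q hq using hGzero q hq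
    rw [hev.fderiv_eq, fderiv_fun_const]
    rfl
  intro p hp
  refine ⟨?_, hGzero p hp⟩
  have hG0 : pd0 G p = 0 := by rw [pd0, hGfd p hp]; rfl
  have hG1 : pd1 G p = 0 := by rw [pd1, hGfd p hp]; rfl
  have h4 := heq4 p hp
  rw [hGzero p hp, hG0, hG1, hF0 p hp] at h4
  have hF1 : pd1 F p = 0 := by linarith [h4]
  have h2 := heq2 p hp
  rw [hF0 p hp, hG0, hG1, hF1] at h2
  have hnne : (n : ℝ) ≠ 0 := by linarith
  have : (n : ℝ) * F p = 0 := by linear_combination h2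
  exact (mul_eq_zero.mp this).resolve_left hnne
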